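/- With R(n) = (1/n!) ∫_{n+2}^∞ ((z - (n+2))/2) z^{n-1} e^{-z} dz and r(n) = (1/n!) ∫_{2(n+2)}^∞ (z - 2(n+2)) z^{n-1} e^{-z} dz, one has R(n) ≥ 1/√(8πn) + O(1/n) and r(n) < (2/e)ⁿ; consequently (1 - r(n))/(1 - R(n)) = 1 + 1/√(8πn) + O(1/n) > 1 + c/√n for some universal constant c > 0 and all sufficiently large n. -/

import Mathlib

open MeasureTheory Set Real
open Filter Stirling


lemma integrableOn_pow_exp (k : ℕ) {a : ℝ} (ha : 0 ≤ a) :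
    IntegrableOn (fun z : ℝ => z ^ k * Real.exp (-z)) (Ioi a) := by
  have h0 : IntegrableOn (fun z : ℝ => z ^ k * Real.exp (-z)) (Ioi 0) := by
    have h := Real.GammaIntegral_convergent (s := (k : ℝ) + 1) (by positivity)
    refine h.congr_fun (fun x hx => ?_) measurableSet_Ioi
    simp only [add_sub_cancel_right, Real.rpow_natCast]
    ring
  exact h0.mono_set (Ioi_subset_Ioi ha)

lemma integrableOn_pow_exp' (k : ℕ) (c : ℝ) {a : ℝ} (ha : 0 ≤ a) :
    IntegrableOn (fun z : ℝ => c * z ^ k * Real.exp (-z)) (Ioi a) := by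
  have h2 : IntegrableOn (fun x : ℝ => c * (x ^ k * Real.exp (-x))) (Ioi a) :=
    (integrableOn_pow_exp k ha).const_mul c
  refine h2.congr_fun (fun x _ => by ring) measurableSet_Ioi

lemma J_rec (m : ℕ) {a : ℝ} (ha : 0 ≤ a) :
    ∫ z in Ioi a, z ^ (m + 1) * Real.exp (-z)
      = (m + 1 : ℝ) * (∫ z in Ioi a, z ^ m * Real.exp (-z)) + a ^ (m + 1) * Real.exp (-a) := by
  have hd : ∀ x ∈ Ioi a, HasDerivAt (fun z : ℝ => -(z ^ (m + 1) * Real.exp (-z)))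
      (x ^ (m + 1) * Real.exp (-x) - (m + 1 : ℝ) * x ^ m * Real.exp (-x)) x := by
    intro x _
    have h1 : HasDerivAt (fun z : ℝ => z ^ (m + 1) * Real.exp (-z))
        ((m + 1 : ℝ) * x ^ m * Real.exp (-x) + x ^ (m + 1) * (Real.exp (-x) * (-1))) x := by
      have := (hasDerivAt_pow (m + 1) x).mul ((Real.hasDerivAt_exp (-x)).comp x (hasDerivAt_neg x))
      exact this.congr_deriv (by simp)
    have h2 := h1.neg
    exact h2.congr_deriv (by ring)
  have hint : IntegrableOn (fun x : ℝ =>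
      x ^ (m + 1) * Real.exp (-x) - (m + 1 : ℝ) * x ^ m * Real.exp (-x)) (Ioi a) := by
    have h2 := integrableOn_pow_exp' m ((m:ℝ)+1) ha
    exact (integrableOn_pow_exp (m + 1) ha).sub h2
  have htend : Tendsto (fun z : ℝ => -(z ^ (m + 1) * Real.exp (-z))) atTop (nhds 0) := by
    simpa using (tendsto_pow_mul_exp_neg_atTop_nhds_zero (m + 1)).neg
  have hcont : ContinuousWithinAt (fun z : ℝ => -(z ^ (m + 1) * Real.exp (-z))) (Ici a) a :=
    (Continuous.continuousWithinAt (by continuity))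
  have key := integral_Ioi_of_hasDerivAt_of_tendsto hcont hd hint htend
  rw [integral_sub (integrableOn_pow_exp (m + 1) ha) (integrableOn_pow_exp' m ((m:ℝ)+1) ha)] at key
  have hmul : ∫ z in Ioi a, ((m:ℝ) + 1) * z ^ m * Real.exp (-z)
      = (m + 1 : ℝ) * ∫ z in Ioi a, z ^ m * Real.exp (-z) := by
    rw [← integral_const_mul]
    congr 1; ext z; ring
  rw [hmul] at key
  linarith [key]

lemma J_zero (m : ℕ) : ∫ z in Ioi (0 : ℝ), z ^ m * Real.exp (-z) = m.factorial := by
  induction m with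
  | zero => simpa using integral_exp_neg_Ioi 0
  | succ k ih =>
      rw [J_rec k le_rfl]
      rw [ih]
      simp [Nat.factorial_succ]

lemma J_nonneg (m : ℕ) {a : ℝ} (ha : 0 ≤ a) :
    0 ≤ ∫ z in Ioi a, z ^ m * Real.exp (-z) := by
  refine setIntegral_nonneg measurableSet_Ioi (fun x hx => ?_)
  have : 0 ≤ x := le_trans ha (le_of_lt hx)
  positivity

lemma J_le (m : ℕ) {a : ℝ} (ha : 0 ≤ a) :
    (∫ z in Ioi a, z ^ m * Real.exp (-z)) ≤ m.factorial := by
  rw [← J_zero m]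
  refine setIntegral_mono_set (integrableOn_pow_exp m le_rfl) ?_ ?_
  · filter_upwards [ae_restrict_mem measurableSet_Ioi] with x hx
    have : (0:ℝ) ≤ x := le_of_lt hx
    positivity
  · exact HasSubset.Subset.eventuallyLE (Ioi_subset_Ioi ha)

lemma sqrtpi_le_stirlingSeq {n : ℕ} (hn : 1 ≤ n) : Real.sqrt π ≤ stirlingSeq n := by
  refine le_of_tendsto tendsto_stirlingSeq_sqrt_pi (eventually_atTop.2 ⟨n, fun m hm => ?_⟩)
  obtain ⟨n', rfl⟩ := Nat.exists_eq_add_of_le hn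
  obtain ⟨m', rfl⟩ := Nat.exists_eq_add_of_le (le_trans hn hm)
  have : n' ≤ m' := by omega
  simpa [Nat.add_comm] using stirlingSeq'_antitone this

lemma stirlingSeq_le {n : ℕ} (hn : 1 ≤ n) :
    stirlingSeq n ≤ Real.sqrt π * Real.exp (1 / (2 * n)) := by
  have hπ : (0:ℝ) < Real.sqrt π := Real.sqrt_pos.2 Real.pi_pos
  have claim : ∀ m, n ≤ m →
      Real.log (stirlingSeq n) - 1 / (2 * n) ≤ Real.log (stirlingSeq m) - 1 / (2 * m) := by
    intro m hm
    induction m, hm using Nat.le_induction with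
    | base => exact le_rfl
    | succ m hm ih =>
        have hm1 : 1 ≤ m := le_trans hn hm
        obtain ⟨k, rfl⟩ := Nat.exists_eq_add_of_le hm1
        have hstep := log_stirlingSeq_sub_log_stirlingSeq_succ (k + 1)
        have h2 : (1:ℝ) / (4 * ((k:ℝ) + 1) ^ 2) ≤ 1 / (2 * ((k:ℝ) + 1)) - 1 / (2 * ((k:ℝ) + 2)) := by
          have hk : (0:ℝ) < (k:ℝ) + 1 := by positivity
          rw [div_sub_div _ _ (by positivity) (by positivity)]
          rw [div_le_div_iff₀ (by positivity) (by positivity)]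
          push_cast
          nlinarith [sq_nonneg ((k:ℝ))]
        simp only [show 1 + k = k + 1 from by omega, show k + 1 + 1 = k + 2 from by omega] at ih hstep ⊢
        push_cast at ih h2 hstep ⊢
        nlinarith [hstep, h2, ih]
  have hlim : Tendsto (fun m => Real.log (stirlingSeq m) - 1 / (2 * m)) atTop
      (nhds (Real.log (Real.sqrt π) - 0)) := by
    refine Tendsto.sub ?_ ?_
    · exact (Real.continuousAt_log hπ.ne').tendsto.comp tendsto_stirlingSeq_sqrt_pi
    · have h2m : Tendsto (fun m : ℕ => 2 * (m:ℝ)) atTop atTop :=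
        (tendsto_natCast_atTop_atTop).const_mul_atTop two_pos
      have := h2m.inv_tendsto_atTop
      simpa [Pi.inv_def, one_div] using this
  have hle : Real.log (stirlingSeq n) - 1 / (2 * n) ≤ Real.log (Real.sqrt π) - 0 :=
    ge_of_tendsto hlim (eventually_atTop.2 ⟨n, fun m hm => claim m hm⟩)
  have hpos : 0 < stirlingSeq n := by
    obtain ⟨n', rfl⟩ := Nat.exists_eq_add_of_le hn
    simpa [Nat.add_comm] using stirlingSeq'_pos n'
  calc stirlingSeq n = Real.exp (Real.log (stirlingSeq n)) := (Real.exp_log hpos).symm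
    _ ≤ Real.exp (Real.log (Real.sqrt π) + 1 / (2 * n)) := by
        apply Real.exp_le_exp.2; linarith
    _ = Real.sqrt π * Real.exp (1 / (2 * n)) := by
        rw [Real.exp_add, Real.exp_log hπ]

lemma factorial_ge {n : ℕ} (hn : 1 ≤ n) :
    Real.sqrt π * (Real.sqrt (2 * n) * ((n:ℝ) / Real.exp 1) ^ n) ≤ n.factorial := by
  have hD : (0:ℝ) < Real.sqrt (2 * n) * ((n:ℝ) / Real.exp 1) ^ n := by
    have : (0:ℝ) < (n:ℝ) := by exact_mod_cast hn
    positivity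
  have h := sqrtpi_le_stirlingSeq hn
  rw [stirlingSeq, le_div_iff₀ hD] at h
  linarith

lemma factorial_le {n : ℕ} (hn : 1 ≤ n) :
    (n.factorial : ℝ) ≤ Real.sqrt π * (Real.sqrt (2 * n) * ((n:ℝ) / Real.exp 1) ^ n)
      * Real.exp (1 / (2 * n)) := by
  have hD : (0:ℝ) < Real.sqrt (2 * n) * ((n:ℝ) / Real.exp 1) ^ n := by
    have : (0:ℝ) < (n:ℝ) := by exact_mod_cast hn
    positivity
  have h := stirlingSeq_le hn
  rw [stirlingSeq, div_le_iff₀ hD] at h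
  linarith [h]

-- key elementary inequalities
lemma pow_upper {x : ℝ} (hx : 1 ≤ x) (k : ℕ) (hk : x = (k:ℝ)) :
    (x + 2) ^ k < x ^ k * Real.exp 2 := by
  have hx0 : 0 < x := lt_of_lt_of_le one_pos hx
  have h1 : x + 2 < x * Real.exp (2 / x) := by
    have h2 : 2 / x + 1 < Real.exp (2 / x) := Real.add_one_lt_exp (by positivity)
    have := mul_lt_mul_of_pos_left h2 hx0
    calc x + 2 = x * (2 / x + 1) := by field_simp; ring
      _ < x * Real.exp (2 / x) := this
  have hk0 : k ≠ 0 := by rintro rfl; simp at hk; linarith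
  have h3 : (x + 2) ^ k < (x * Real.exp (2 / x)) ^ k :=
    pow_lt_pow_left₀ h1 (by positivity) hk0
  have h4 : (x * Real.exp (2 / x)) ^ k = x ^ k * Real.exp 2 := by
    rw [mul_pow, ← Real.exp_nat_mul]
    congr 2
    rw [hk] at hx0 ⊢
    field_simp
  linarith [h3, h4 ▸ h3]

lemma pow_lower {x : ℝ} (hx : 1 ≤ x) (k : ℕ) (hk : x = (k:ℝ)) :
    x ^ k * Real.exp (2 - 4 / x) ≤ (x + 2) ^ k := by
  have hx0 : 0 < x := lt_of_lt_of_le one_pos hx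
  have h1 : x * Real.exp (2 / (x + 2)) ≤ x + 2 := by
    have h2 : 1 - 2 / (x + 2) ≤ Real.exp (-(2 / (x + 2))) := by
      have := Real.add_one_le_exp (-(2 / (x + 2))); linarith
    have hpos : (0:ℝ) < 1 - 2 / (x + 2) := by
      rw [sub_pos, div_lt_one (by positivity)]; linarith
    have h3 : Real.exp (2 / (x + 2)) ≤ (1 - 2 / (x + 2))⁻¹ := by
      calc Real.exp (2 / (x + 2)) = (Real.exp (-(2 / (x + 2))))⁻¹ := by
            rw [Real.exp_neg, inv_inv]
        _ ≤ (1 - 2 / (x + 2))⁻¹ := inv_anti₀ hpos h2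
    have h4 : (1 - 2 / (x + 2))⁻¹ = (x + 2) / x := by
      rw [show 1 - 2 / (x + 2) = x / (x + 2) by field_simp; ring]
      rw [inv_div]
    calc x * Real.exp (2 / (x + 2)) ≤ x * ((x + 2) / x) := by
          rw [h4] at h3; exact mul_le_mul_of_nonneg_left h3 hx0.le
      _ = x + 2 := by field_simp
  have h5 : (x * Real.exp (2 / (x + 2))) ^ k ≤ (x + 2) ^ k :=
    pow_le_pow_left₀ (by positivity) h1 k
  have h6 : (x * Real.exp (2 / (x + 2))) ^ k = x ^ k * Real.exp (k * (2 / (x + 2))) := by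
    rw [mul_pow, ← Real.exp_nat_mul]
  have h7 : 2 - 4 / x ≤ (k:ℝ) * (2 / (x + 2)) := by
    rw [← hk]
    have e1 : 2 - 4 / x = (2 * x - 4) / x := by field_simp
    have e2 : x * (2 / (x + 2)) = 2 * x / (x + 2) := by ring
    rw [e1, e2, div_le_div_iff₀ hx0 (by positivity)]
    nlinarith
  have h8 : Real.exp (2 - 4 / x) ≤ Real.exp ((k:ℝ) * (2 / (x + 2))) := Real.exp_le_exp.2 h7
  calc x ^ k * Real.exp (2 - 4 / x) ≤ x ^ k * Real.exp ((k:ℝ) * (2 / (x + 2))) := by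
        exact mul_le_mul_of_nonneg_left h8 (by positivity)
    _ = (x * Real.exp (2 / (x + 2))) ^ k := by rw [h6]
    _ ≤ (x + 2) ^ k := h5

lemma core_R {x A G F P s : ℝ} (hx : 1 ≤ x)
    (hA1 : A ≤ P) (hA2 : P * Real.exp (-4 / x) ≤ A)
    (hP : 0 < P) (hs : 5 / 2 ≤ s) (hG0 : 0 ≤ G) (hGF : G * x ≤ F)
    (hF1 : s * P ≤ F) (hF2 : F ≤ s * P * Real.exp (1 / (2 * x))) (hF0 : 0 < F) :
    (A / 2 - G) / F ≤ 1 / (2 * s) ∧ 1 / (2 * s) - 6 / x ≤ (A / 2 - G) / F := by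
  have hx0 : 0 < x := lt_of_lt_of_le one_pos hx
  have hs0 : 0 < s := by linarith
  have hA0 : (0:ℝ) ≤ A := le_trans (by positivity : (0:ℝ) ≤ P * Real.exp (-4 / x)) hA2
  constructor
  · have h1 : (A / 2 - G) / F ≤ (P / 2) / (s * P) := by
      apply div_le_div₀ (by positivity) (by linarith) (by positivity) hF1
    have h2 : (P / 2) / (s * P) = 1 / (2 * s) := by
      field_simp
    rw [h2] at h1
    exact h1
  · have hGF' : G / F ≤ 1 / x := by
      rw [div_le_div_iff₀ hF0 hx0]
      linarith
    have hsplit : (A / 2 - G) / F = (A / 2) / F - G / F := by ring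
    have hlow : (P * Real.exp (-4 / x)) / (2 * (s * P) * Real.exp (1 / (2 * x))) ≤ (A / 2) / F := by
      have he : (A / 2) / F = A / (2 * F) := by ring
      rw [he]
      apply div_le_div₀ hA0 hA2 (by positivity)
      nlinarith [Real.exp_pos (1 / (2 * x))]
    have hsimp : (P * Real.exp (-4 / x)) / (2 * (s * P) * Real.exp (1 / (2 * x)))
        = Real.exp (-4 / x - 1 / (2 * x)) / (2 * s) := by
      rw [Real.exp_sub]
      field_simp
    rw [hsimp] at hlow
    have hexp : 1 - 9 / (2 * x) ≤ Real.exp (-4 / x - 1 / (2 * x)) := by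
      have e : -4 / x - 1 / (2 * x) = -(9 / (2 * x)) := by
        field_simp
        ring
      rw [e]
      have h := Real.add_one_le_exp (-(9 / (2 * x)))
      linarith
    have hmono : (1 - 9 / (2 * x)) / (2 * s) ≤ Real.exp (-4 / x - 1 / (2 * x)) / (2 * s) := by
      gcongr
    have hsplit2 : (1 - 9 / (2 * x)) / (2 * s) = 1 / (2 * s) - (9 / (2 * x)) / (2 * s) := by ring
    have hb : (9 / (2 * x)) / (2 * s) ≤ 5 / x := by
      have h1 : (9 / (2 * x)) / (2 * s) ≤ (9 / (2 * x)) / 5 := by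
        gcongr
        linarith
      have h2 : (9 / (2 * x)) / 5 ≤ 5 / x := by
        rw [div_le_div_iff₀ (by norm_num) hx0]
        have e3 : 9 / (2 * x) * x = 9 / 2 := by
          field_simp
        rw [e3]
        norm_num
      linarith
    have h6 : 6 / x = 5 / x + 1 / x := by ring
    linarith [hlow, hmono, hsplit2, hb, hGF', hsplit, h6]

lemma core_r {x B G F P s : ℝ} (k : ℕ) (hk : x = (k:ℝ)) (hx : 1 ≤ x)
    (hB : B = (2 * (x + 2)) ^ k * Real.exp (-(2 * (x + 2))))
    (hP : P = (x / Real.exp 1) ^ k)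
    (hs : 5 / 2 ≤ s) (hG0 : 0 ≤ G) (hF1 : s * P ≤ F) (hF0 : 0 < F) :
    (B - (x + 4) * G) / F < (2 / Real.exp 1) ^ k := by
  have hx0 : 0 < x := lt_of_lt_of_le one_pos hx
  have hEpow : (Real.exp 1) ^ k = Real.exp x := by
    rw [Real.exp_one_pow, ← hk]
  have hPx : P = x ^ k * Real.exp (-x) := by
    rw [hP, div_pow, hEpow, Real.exp_neg]
    ring
  have hBx : B = 2 ^ k * (x + 2) ^ k * (Real.exp (-x) * Real.exp (-x) * Real.exp (-4)) := by
    rw [hB, mul_pow, show -(2 * (x + 2)) = -x + (-x + -4) by ring, Real.exp_add, Real.exp_add]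
    ring
  have h2E : (2 / Real.exp 1) ^ k = 2 ^ k * Real.exp (-x) := by
    rw [div_pow, hEpow, Real.exp_neg]
    ring
  have hkey : Real.exp 2 * Real.exp (-4) ≤ s := by
    rw [← Real.exp_add]
    norm_num
    have h1 : Real.exp (-2) ≤ Real.exp 0 := Real.exp_le_exp.2 (by norm_num)
    rw [Real.exp_zero] at h1
    linarith
  have hpow := pow_upper hx k hk
  have hlt : B < (2 / Real.exp 1) ^ k * (s * P) := by
    rw [hBx, h2E, hPx]
    have hu : (0:ℝ) < Real.exp (-x) := Real.exp_pos _
    have h2k : (0:ℝ) < 2 ^ k := by positivity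
    have hxk : (0:ℝ) < x ^ k := by positivity
    have f1 : 2 ^ k * (Real.exp (-x) * Real.exp (-x) * Real.exp (-4)) * (x + 2) ^ k
        < 2 ^ k * (Real.exp (-x) * Real.exp (-x) * Real.exp (-4)) * (x ^ k * Real.exp 2) :=
      mul_lt_mul_of_pos_left hpow (by positivity)
    have f2 : (2 ^ k * (Real.exp (-x) * Real.exp (-x)) * x ^ k) * (Real.exp 2 * Real.exp (-4))
        ≤ (2 ^ k * (Real.exp (-x) * Real.exp (-x)) * x ^ k) * s :=
      mul_le_mul_of_nonneg_left hkey (by positivity)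
    nlinarith [f1, f2]
  have hle : (2 / Real.exp 1) ^ k * (s * P) ≤ (2 / Real.exp 1) ^ k * F :=
    mul_le_mul_of_nonneg_left hF1 (by positivity)
  have hnum : (B - (x + 4) * G) / F ≤ B / F := by
    gcongr
    nlinarith [hG0, hx0]
  have hBF : B / F < (2 / Real.exp 1) ^ k := by
    rw [div_lt_iff₀ hF0]
    linarith
  linarith
/-- `R(n) = (1/n!) ∫_{n+2}^∞ ((z-(n+2))/2) z^{n-1} e^{-z} dz`. -/
noncomputable def Rfun (n : ℕ) : ℝ :=
  (1 / (n.factorial : ℝ)) *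
    ∫ z in Ioi ((n : ℝ) + 2), ((z - ((n : ℝ) + 2)) / 2) * z ^ (n - 1) * Real.exp (-z)

/-- `r(n) = (1/n!) ∫_{2(n+2)}^∞ (z - 2(n+2)) z^{n-1} e^{-z} dz`. -/
noncomputable def rfun (n : ℕ) : ℝ :=
  (1 / (n.factorial : ℝ)) *
    ∫ z in Ioi (2 * ((n : ℝ) + 2)), (z - 2 * ((n : ℝ) + 2)) * z ^ (n - 1) * Real.exp (-z)


lemma Rfun_eq (m : ℕ) :
    Rfun (m + 1) = ((((m:ℝ) + 1) + 2) ^ (m + 1) * Real.exp (-(((m:ℝ) + 1) + 2)) / 2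
      - ∫ z in Ioi (((m:ℝ) + 1) + 2), z ^ m * Real.exp (-z)) / ((m + 1).factorial : ℝ) := by
  have ha : (0:ℝ) ≤ ((m:ℝ) + 1) + 2 := by positivity
  unfold Rfun
  have hc : ((m + 1 : ℕ) : ℝ) + 2 = ((m:ℝ) + 1) + 2 := by push_cast; ring
  rw [hc]
  simp only [Nat.add_sub_cancel]
  have h1 : ∀ z : ℝ, ((z - (((m:ℝ) + 1) + 2)) / 2) * z ^ m * Real.exp (-z)
      = (1/2 : ℝ) * (z ^ (m + 1) * Real.exp (-z))
        - ((((m:ℝ) + 1) + 2) / 2) * (z ^ m * Real.exp (-z)) := fun z => by ring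
  simp only [h1]
  rw [integral_sub ((integrableOn_pow_exp (m + 1) ha).const_mul _)
      ((integrableOn_pow_exp m ha).const_mul _),
    integral_const_mul, integral_const_mul, J_rec m ha]
  have hF : ((m + 1).factorial : ℝ) ≠ 0 := by positivity
  field_simp
  ring

lemma rfun_eq (m : ℕ) :
    rfun (m + 1) = ((2 * (((m:ℝ) + 1) + 2)) ^ (m + 1) * Real.exp (-(2 * (((m:ℝ) + 1) + 2)))
      - (((m:ℝ) + 5)) * ∫ z in Ioi (2 * (((m:ℝ) + 1) + 2)), z ^ m * Real.exp (-z))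
        / ((m + 1).factorial : ℝ) := by
  have ha : (0:ℝ) ≤ 2 * (((m:ℝ) + 1) + 2) := by positivity
  unfold rfun
  have hc : 2 * (((m + 1 : ℕ) : ℝ) + 2) = 2 * (((m:ℝ) + 1) + 2) := by push_cast; ring
  rw [hc]
  simp only [Nat.add_sub_cancel]
  have h1 : ∀ z : ℝ, (z - 2 * (((m:ℝ) + 1) + 2)) * z ^ m * Real.exp (-z)
      = (1 : ℝ) * (z ^ (m + 1) * Real.exp (-z))
        - (2 * (((m:ℝ) + 1) + 2)) * (z ^ m * Real.exp (-z)) := fun z => by ring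
  simp only [h1]
  rw [integral_sub ((integrableOn_pow_exp (m + 1) ha).const_mul _)
      ((integrableOn_pow_exp m ha).const_mul _),
    integral_const_mul, integral_const_mul, J_rec m ha]
  have hF : ((m + 1).factorial : ℝ) ≠ 0 := by positivity
  field_simp
  ring

lemma sqrt8pi {y : ℝ} (hy : 0 ≤ y) :
    Real.sqrt (8 * π * y) = 2 * (Real.sqrt π * Real.sqrt (2 * y)) := by
  rw [← Real.sqrt_mul Real.pi_pos.le (2 * y), show 8 * π * y = 4 * (π * (2 * y)) by ring,
      Real.sqrt_mul (by norm_num : (0:ℝ) ≤ 4), show (4:ℝ) = 2 ^ 2 by norm_num,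
      Real.sqrt_sq (by norm_num : (0:ℝ) ≤ 2)]

lemma s_lower {y : ℝ} (hy : 1 ≤ y) : 5 / 2 ≤ Real.sqrt π * Real.sqrt (2 * y) := by
  rw [← Real.sqrt_mul Real.pi_pos.le (2 * y)]
  rw [show (5/2:ℝ) = Real.sqrt ((5/2) ^ 2) from (Real.sqrt_sq (by norm_num)).symm]
  apply Real.sqrt_le_sqrt
  nlinarith [Real.pi_gt_d6]

lemma R_bounds {n : ℕ} (hn : 1 ≤ n) :
    Rfun n ≤ 1 / Real.sqrt (8 * π * n) ∧ 1 / Real.sqrt (8 * π * n) - 6 / n ≤ Rfun n := by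
  obtain ⟨m, rfl⟩ : ∃ m, n = m + 1 := ⟨n - 1, by omega⟩
  have hx1 : (1:ℝ) ≤ (m:ℝ) + 1 := by
    have := Nat.cast_nonneg (α := ℝ) m
    linarith
  have hx0 : (0:ℝ) < (m:ℝ) + 1 := by linarith
  set x : ℝ := (m:ℝ) + 1 with hxdef
  have hxk : x = ((m + 1 : ℕ) : ℝ) := by push_cast; ring
  have ha : (0:ℝ) ≤ x + 2 := by linarith
  -- quantities
  have hfg := factorial_ge (n := m + 1) (by omega)
  have hfl := factorial_le (n := m + 1) (by omega)
  push_cast at hfg hfl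
  rw [Rfun_eq m]
  have hgoalcast : ((m + 1 : ℕ) : ℝ) = x := by push_cast; ring
  have hsq : Real.sqrt (8 * π * ((m + 1 : ℕ) : ℝ)) = 2 * (Real.sqrt π * Real.sqrt (2 * x)) := by
    rw [hgoalcast, sqrt8pi (by linarith)]
  rw [hsq]
  have hs := s_lower hx1
  have hP0 : (0:ℝ) < (x / Real.exp 1) ^ (m + 1) := by positivity
  have hF0 : (0:ℝ) < ((m + 1).factorial : ℝ) := by positivity
  -- A bounds
  have hpu := pow_upper hx1 (m + 1) hxk
  have hpl := pow_lower hx1 (m + 1) hxk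
  have hPx : (x / Real.exp 1) ^ (m + 1) = x ^ (m + 1) * Real.exp (-x) := by
    rw [div_pow, Real.exp_one_pow, ← hxk, Real.exp_neg]
    ring
  have hA1 : (x + 2) ^ (m + 1) * Real.exp (-(x + 2)) ≤ (x / Real.exp 1) ^ (m + 1) := by
    rw [hPx]
    have he : Real.exp 2 * Real.exp (-(x + 2)) = Real.exp (-x) := by
      rw [← Real.exp_add]
      congr 1
      ring
    have h1 := mul_le_mul_of_nonneg_right hpu.le (Real.exp_pos (-(x + 2))).le
    have he2 : x ^ (m + 1) * Real.exp 2 * Real.exp (-(x + 2)) = x ^ (m + 1) * Real.exp (-x) := by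
      rw [mul_assoc, he]
    linarith [h1, he2]
  have hA2 : (x / Real.exp 1) ^ (m + 1) * Real.exp (-4 / x)
      ≤ (x + 2) ^ (m + 1) * Real.exp (-(x + 2)) := by
    rw [hPx]
    have he : Real.exp (2 - 4 / x) * Real.exp (-(x + 2)) = Real.exp (-x) * Real.exp (-4 / x) := by
      rw [← Real.exp_add, ← Real.exp_add]
      congr 1
      ring
    have h1 := mul_le_mul_of_nonneg_right hpl (Real.exp_pos (-(x + 2))).le
    have he2 : x ^ (m + 1) * Real.exp (2 - 4 / x) * Real.exp (-(x + 2))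
        = x ^ (m + 1) * Real.exp (-x) * Real.exp (-4 / x) := by
      rw [mul_assoc, he, ← mul_assoc]
    linarith [h1, he2]
  -- G bounds
  have hG0 : 0 ≤ ∫ z in Ioi (x + 2), z ^ m * Real.exp (-z) := J_nonneg m ha
  have hGle := J_le m ha
  have hFF : ((m + 1).factorial : ℝ) = x * (m.factorial : ℝ) := by
    rw [Nat.factorial_succ]
    push_cast
    ring
  have hGF : (∫ z in Ioi (x + 2), z ^ m * Real.exp (-z)) * x ≤ ((m + 1).factorial : ℝ) := by
    rw [hFF]
    have h1 := mul_le_mul_of_nonneg_right hGle (le_of_lt hx0)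
    linarith [h1]
  have hF1 : (Real.sqrt π * Real.sqrt (2 * x)) * (x / Real.exp 1) ^ (m + 1)
      ≤ ((m + 1).factorial : ℝ) := by
    linarith [hfg]
  have hF2 : ((m + 1).factorial : ℝ)
      ≤ (Real.sqrt π * Real.sqrt (2 * x)) * (x / Real.exp 1) ^ (m + 1)
        * Real.exp (1 / (2 * x)) := by
    linarith [hfl]
  have := core_R hx1 hA1 hA2 hP0 hs hG0 hGF hF1 hF2 hF0
  refine ⟨this.1, ?_⟩
  rw [hgoalcast]
  exact this.2

lemma r_bounds {n : ℕ} (hn : 1 ≤ n) : rfun n < (2 / Real.exp 1) ^ n := by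
  obtain ⟨m, rfl⟩ : ∃ m, n = m + 1 := ⟨n - 1, by omega⟩
  have hx1 : (1:ℝ) ≤ (m:ℝ) + 1 := by
    have := Nat.cast_nonneg (α := ℝ) m
    linarith
  set x : ℝ := (m:ℝ) + 1 with hxdef
  have hxk : x = ((m + 1 : ℕ) : ℝ) := by push_cast; ring
  have hb0 : (0:ℝ) ≤ 2 * (x + 2) := by linarith
  have hfg := factorial_ge (n := m + 1) (by omega)
  push_cast at hfg
  rw [rfun_eq m]
  have hG0 : 0 ≤ ∫ z in Ioi (2 * (x + 2)), z ^ m * Real.exp (-z) := J_nonneg m hb0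
  have hF0 : (0:ℝ) < ((m + 1).factorial : ℝ) := by positivity
  have hF1 : (Real.sqrt π * Real.sqrt (2 * x)) * (x / Real.exp 1) ^ (m + 1)
      ≤ ((m + 1).factorial : ℝ) := by linarith [hfg]
  have hcoef : (m:ℝ) + 5 = x + 4 := by rw [hxdef]; ring
  rw [hcoef]
  exact core_r (m + 1) hxk hx1 rfl rfl (s_lower hx1) hG0 hF1 hF0

lemma Rfun_nonneg (n : ℕ) : 0 ≤ Rfun n := by
  unfold Rfun
  apply mul_nonneg (by positivity)
  apply setIntegral_nonneg measurableSet_Ioi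
  intro x hx
  have h1 : (n:ℝ) + 2 < x := hx
  have h2 : (0:ℝ) < x := lt_of_le_of_lt (by positivity) h1
  have h3 : 0 ≤ (x - ((n:ℝ) + 2)) / 2 := by linarith
  positivity

lemma rfun_nonneg (n : ℕ) : 0 ≤ rfun n := by
  unfold rfun
  apply mul_nonneg (by positivity)
  apply setIntegral_nonneg measurableSet_Ioi
  intro x hx
  have h1 : 2 * ((n:ℝ) + 2) < x := hx
  have h2 : (0:ℝ) < x := lt_of_le_of_lt (by positivity) h1
  have h3 : 0 ≤ x - 2 * ((n:ℝ) + 2) := by linarith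
  positivity

lemma geom_small : ∃ N : ℕ, ∀ n ≥ N, 1 ≤ n ∧ (2 / Real.exp 1) ^ n ≤ 1 / n := by
  have hnorm : ‖(2 / Real.exp 1 : ℝ)‖ < 1 := by
    rw [Real.norm_eq_abs, abs_of_pos (by positivity), div_lt_one (Real.exp_pos 1)]
    linarith [Real.exp_one_gt_d9]
  have hsum := summable_pow_mul_geometric_of_norm_lt_one 1 hnorm (R := ℝ)
  have htend := hsum.tendsto_atTop_zero
  have hev : ∀ᶠ n : ℕ in atTop, (n:ℝ) ^ 1 * (2 / Real.exp 1) ^ n < 1 :=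
    htend.eventually_lt_const one_pos
  obtain ⟨N, hN⟩ := eventually_atTop.1 (hev.and (eventually_ge_atTop 1))
  refine ⟨N, fun n hn => ?_⟩
  obtain ⟨h1, h2⟩ := hN n hn
  refine ⟨h2, ?_⟩
  have hn0 : (0:ℝ) < n := by exact_mod_cast h2
  rw [le_div_iff₀ hn0]
  rw [pow_one] at h1
  nlinarith

lemma part3 : ∃ N : ℕ, ∀ n ≥ N, 1 ≤ n ∧
    |(1 - rfun n) / (1 - Rfun n) - (1 + 1 / Real.sqrt (8 * π * n))| ≤ 10 / n := by
  obtain ⟨N0, hN0⟩ := geom_small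
  refine ⟨max N0 1, fun n hn => ?_⟩
  obtain ⟨hn1, hgeo⟩ := hN0 n (le_trans (le_max_left _ _) hn)
  refine ⟨hn1, ?_⟩
  have hn0 : (0:ℝ) < n := by exact_mod_cast hn1
  have hn1' : (1:ℝ) ≤ n := by exact_mod_cast hn1
  have hs := s_lower hn1'
  have hsq := sqrt8pi (le_of_lt hn0)
  have h2s : (5:ℝ) ≤ Real.sqrt (8 * π * (n:ℝ)) := by rw [hsq]; linarith
  set S := 1 / Real.sqrt (8 * π * (n:ℝ)) with hSdef
  set R := Rfun n with hRdef
  set r := rfun n with hrdef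
  have hS0 : 0 ≤ S := by rw [hSdef]; positivity
  have hS5 : S ≤ 1 / 5 := by
    rw [hSdef]
    exact one_div_le_one_div_of_le (by norm_num) h2s
  have hmul : S * S = 1 / (8 * π * n) := by
    rw [hSdef, div_mul_div_comm, Real.mul_self_sqrt (by positivity)]
    norm_num
  have h8n : 1 / (8 * π * (n:ℝ)) ≤ 1 / n := by
    apply one_div_le_one_div_of_le hn0
    nlinarith [Real.pi_gt_three]
  have hR := R_bounds hn1
  have hR1 : R ≤ S := hR.1
  have hR2 : S - 6 / n ≤ R := hR.2
  have hR0 : 0 ≤ R := Rfun_nonneg n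
  have hr0 : 0 ≤ r := rfun_nonneg n
  have hr1 : r ≤ 1 / n := le_trans (r_bounds hn1).le hgeo
  have hden : 4 / 5 ≤ 1 - R := by linarith
  have hne : (1 - R) ≠ 0 := by linarith
  have heq : (1 - r) / (1 - R) - (1 + S) = (R - S - r + S * R) / (1 - R) := by
    field_simp
    ring
  have hSR : S * R ≤ 1 / n := by
    have h1 : S * R ≤ S * S := mul_le_mul_of_nonneg_left hR1 hS0
    rw [hmul] at h1
    linarith
  have hSR0 : 0 ≤ S * R := mul_nonneg hS0 hR0
  have hglue : (8:ℝ) / n = 6 / n + 1 / n + 1 / n := by ring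
  have hnum : |R - S - r + S * R| ≤ 8 / n := by
    rw [abs_le]
    constructor <;> linarith
  rw [heq, abs_div, abs_of_pos (by linarith : (0:ℝ) < 1 - R)]
  calc |R - S - r + S * R| / (1 - R) ≤ (8 / n) / (4 / 5) :=
        div_le_div₀ (by positivity) hnum (by norm_num) hden
    _ = 10 / n := by ring

lemma part4 : ∃ c : ℝ, 0 < c ∧ ∃ N : ℕ, ∀ n ≥ N,
    (1 - rfun n) / (1 - Rfun n) > 1 + c / Real.sqrt n := by
  obtain ⟨N3, hN3⟩ := part3
  refine ⟨1 / 10, by norm_num, max N3 40000, fun n hn => ?_⟩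
  obtain ⟨hn1, habs⟩ := hN3 n (le_trans (le_max_left _ _) hn)
  have hn4 : (40000:ℕ) ≤ n := le_trans (le_max_right _ _) hn
  have hn0 : (0:ℝ) < n := by exact_mod_cast hn1
  have hu : (200:ℝ) ≤ Real.sqrt n := by
    rw [show (200:ℝ) = Real.sqrt (200 ^ 2) from (Real.sqrt_sq (by norm_num)).symm]
    apply Real.sqrt_le_sqrt
    norm_num
    exact_mod_cast hn4
  have hu0 : (0:ℝ) < Real.sqrt n := by linarith
  have hS_ge : (10 / 51) / Real.sqrt n ≤ 1 / Real.sqrt (8 * π * n) := by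
    have h1 : Real.sqrt (8 * π * (n:ℝ)) ≤ (51 / 10) * Real.sqrt n := by
      rw [show 8 * π * (n:ℝ) = (8 * π) * (n:ℝ) by ring, Real.sqrt_mul (by positivity) ]
      have h2 : Real.sqrt (8 * π) ≤ 51 / 10 := by
        rw [show (51 / 10:ℝ) = Real.sqrt ((51 / 10) ^ 2) from (Real.sqrt_sq (by norm_num)).symm]
        apply Real.sqrt_le_sqrt
        nlinarith [Real.pi_lt_d2]
      nlinarith [Real.sqrt_nonneg (n:ℝ)]
    have h2 : (0:ℝ) < Real.sqrt (8 * π * n) := Real.sqrt_pos.2 (by positivity)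
    have e1 : (10 / 51) / Real.sqrt (n:ℝ) = 1 / ((51 / 10) * Real.sqrt (n:ℝ)) := by
      field_simp
    rw [e1]
    exact one_div_le_one_div_of_le h2 h1
  have hlow : 1 + 1 / Real.sqrt (8 * π * n) - 10 / n ≤ (1 - rfun n) / (1 - Rfun n) := by
    have h := (abs_le.1 habs).1
    linarith
  have hn_eq : (n:ℝ) = Real.sqrt n * Real.sqrt n := (Real.mul_self_sqrt hn0.le).symm
  have hup : (10:ℝ) / n ≤ (1 / 20) / Real.sqrt n := by
    have h1 : 200 * Real.sqrt (n:ℝ) ≤ n := by nlinarith [hn_eq, hu, hu0]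
    have h2 : (10:ℝ) / n ≤ 10 / (200 * Real.sqrt (n:ℝ)) := by
      gcongr
    have h3 : (10:ℝ) / (200 * Real.sqrt (n:ℝ)) = (1 / 20) / Real.sqrt n := by
      ring
    linarith
  have hkey : (1 / 10) / Real.sqrt (n:ℝ) + (1 / 20) / Real.sqrt (n:ℝ)
      < (10 / 51) / Real.sqrt (n:ℝ) := by
    have e : (1 / 10) / Real.sqrt (n:ℝ) + (1 / 20) / Real.sqrt (n:ℝ)
        = (3 / 20) / Real.sqrt (n:ℝ) := by ring
    rw [e, div_lt_div_iff₀ hu0 hu0]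
    nlinarith [hu0]
  linarith [hS_ge, hlow, hup, hkey]
/-- `R(n) ≥ 1/√(8πn) + O(1/n)`, `r(n) < (2/e)ⁿ`, hence
`(1-r(n))/(1-R(n)) = 1 + 1/√(8πn) + O(1/n) > 1 + c/√n` for large `n`. -/
theorem asymptotics_R_r :
    (∃ C : ℝ, ∃ N : ℕ, ∀ n ≥ N, Rfun n ≥ 1 / Real.sqrt (8 * π * n) - C / n) ∧
    (∃ N : ℕ, ∀ n ≥ N, rfun n < (2 / Real.exp 1) ^ n) ∧
    (∃ C : ℝ, ∃ N : ℕ, ∀ n ≥ N,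
      |(1 - rfun n) / (1 - Rfun n) - (1 + 1 / Real.sqrt (8 * π * n))| ≤ C / n) ∧
    (∃ c : ℝ, 0 < c ∧ ∃ N : ℕ, ∀ n ≥ N,
      (1 - rfun n) / (1 - Rfun n) > 1 + c / Real.sqrt n) := by
  refine ⟨⟨6, 1, fun n hn => (R_bounds hn).2⟩, ⟨1, fun n hn => r_bounds hn⟩, ?_, part4⟩
  obtain ⟨N, hN⟩ := part3
  exact ⟨10, N, fun n hn => (hN n hn).2⟩
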